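/- Let p be an odd prime and s ≥ 1 an integer, and let K_s = C_{p^s} ⋉ ℤ_p^{d_s} be the pro-p-group of finite coclass with central exponent s, where d_s = p^{s-1}(p-1). Then the commutator subgroup [K_s, K_s] is isomorphic to ℤ_p^{d_s} (in particular K_s is metabelian). -/

import Mathlib

lemma padic_eq_zero (p : ℕ) [Fact p.Prime] (y : ℤ_[p]) (h : ∀ k : ℕ, (p : ℤ_[p])^k ∣ y) : y = 0 := by
  by_contra hy
  obtain ⟨k, hk⟩ := PadicInt.exists_pow_neg_lt p (show (0:ℝ) < ‖y‖ by simpa using hy)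
  obtain ⟨z, hz⟩ := h k
  have h1 : ‖y‖ ≤ (p : ℝ)^(-(k:ℤ)) := by
    rw [hz]
    calc ‖(p:ℤ_[p])^k * z‖ ≤ ‖(p:ℤ_[p])^k‖ * ‖z‖ := norm_mul_le _ _
      _ ≤ ‖(p:ℤ_[p])^k‖ * 1 := mul_le_mul_of_nonneg_left (PadicInt.norm_le_one z) (norm_nonneg _)
      _ = (p : ℝ)^(-(k:ℤ)) := by rw [mul_one, PadicInt.norm_p_pow]
  linarith

lemma addhom_padic_smul (p : ℕ) [Fact p.Prime] {ι : Type*}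
    (f : (ι → ℤ_[p]) →+ (ι → ℤ_[p])) (c : ℤ_[p]) (x : ι → ℤ_[p]) :
    f (c • x) = c • f x := by
  have key : ∀ k : ℕ, ∀ j, (p : ℤ_[p])^k ∣ (f (c • x) - c • f x) j := by
    intro k j
    obtain ⟨z, hz⟩ : (p : ℤ_[p])^k ∣ (c - (c.appr k : ℤ_[p])) := by
      have := PadicInt.appr_spec k c
      rwa [Ideal.mem_span_singleton] at this
    set n : ℕ := c.appr k with hn
    have hc : c = (n : ℤ_[p]) + (p:ℤ_[p])^k * z := by rw [← hz]; ring
    have h1 : c • x = n • x + ((p^k : ℕ) • (z • x)) := by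
      funext i
      simp only [Pi.smul_apply, Pi.add_apply, smul_eq_mul, nsmul_eq_mul, Nat.cast_pow, Pi.mul_apply, Pi.natCast_apply, Pi.pow_apply]
      rw [hc]; ring
    have h2 : f (c • x) = n • f x + (p^k : ℕ) • f (z • x) := by
      rw [h1, map_add, map_nsmul, map_nsmul]
    have h3 : (f (c • x) - c • f x) j = (p:ℤ_[p])^k * (f (z • x) j - z * (f x j)) := by
      simp only [Pi.sub_apply, h2, Pi.add_apply, Pi.smul_apply, smul_eq_mul, nsmul_eq_mul,
        Nat.cast_pow, Pi.mul_apply, Pi.natCast_apply, Pi.pow_apply]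
      rw [hc]; ring
    exact ⟨_, h3⟩
  funext j
  have h0 := padic_eq_zero p _ (fun k => key k j)
  have h0' : f (c • x) j - (c • f x) j = 0 := by
    simpa [Pi.sub_apply] using h0
  simpa [sub_eq_zero] using h0'

lemma card_filter_dvd (q m : ℕ) (hq : 0 < q) :
    ((Finset.range (q * m)).filter (fun i => q ∣ i)).card = m := by
  have he : (Finset.range (q * m)).filter (fun i => q ∣ i)
      = (Finset.range m).image (fun t => q * t) := by
    ext i
    simp only [Finset.mem_filter, Finset.mem_range, Finset.mem_image]
    constructor
    · rintro ⟨h1, t, rfl⟩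
      exact ⟨t, Nat.lt_of_mul_lt_mul_left h1, rfl⟩
    · rintro ⟨t, ht, rfl⟩
      exact ⟨(Nat.mul_lt_mul_left hq).2 ht, ⟨t, rfl⟩⟩
  rw [he, Finset.card_image_of_injective _ (fun a b h => Nat.eq_of_mul_eq_mul_left hq h),
    Finset.card_range]

lemma fin_sum_ite_dvd {M : Type*} [AddCommMonoid M] (q n : ℕ) (hq : 0 < q) (c : M) :
    ∑ i : Fin (q * n), (if q ∣ (i:ℕ) then c else 0) = n • c := by
  rw [Fin.sum_univ_eq_sum_range (fun t => if q ∣ t then c else 0) (q*n), ← Finset.sum_filter,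
    Finset.sum_const, card_filter_dvd q n hq]

open scoped commutatorElement

open SemidirectProduct in
lemma sdp_commutator_eq {N T : Type*} [CommGroup N] [CommGroup T] (φ : T →* MulAut N)
    (g h : N ⋊[φ] T) :
    ⁅g, h⁆ = inl ((φ h.right g.left * g.left⁻¹)⁻¹ * (φ g.right h.left * h.left⁻¹)) := by
  obtain ⟨n, t⟩ := g
  obtain ⟨m, u⟩ := h
  ext
  · simp only [commutatorElement_def, mul_left, mul_right, inv_left, inv_right, left_inl]
    simp only [← MulAut.mul_apply, ← map_mul]
    rw [show t * u * t⁻¹ = u by rw [mul_comm t u]; group,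
      show u * u⁻¹ = (1 : T) by group]
    simp only [map_one, MulAut.one_apply, map_inv, mul_inv, inv_inv]
    simp [mul_comm, mul_left_comm, mul_assoc]
  · simp only [commutatorElement_def, mul_right, inv_right, right_inl]
    rw [mul_comm t u]; group

open SemidirectProduct in
theorem sdp_main {N T : Type*} [CommGroup N] [CommGroup T] (φ : T →* MulAut N)
    (t0 : T) (ht0 : ∀ t : T, ∃ k : ℕ, t = t0 ^ k)
    (hinj : ∀ n : N, φ t0 n = n → n = 1) :
    Nonempty (commutator (N ⋊[φ] T) ≃* N) ∧
      ∀ x y : commutator (N ⋊[φ] T), x * y = y * x := by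
  set F : N →* N := MonoidHom.mk' (fun n => φ t0 n * n⁻¹)
    (by intro a b; simp only [map_mul, mul_inv]; exact mul_mul_mul_comm _ _ _ _) with hF
  have hFapp : ∀ n, F n = φ t0 n * n⁻¹ := fun n => rfl
  have hFinj : Function.Injective F := by
    rw [injective_iff_map_eq_one]
    intro n hn
    rw [hFapp, mul_inv_eq_one] at hn
    exact hinj n hn
  have hpow : ∀ (k : ℕ) (n : N), φ (t0 ^ k) n * n⁻¹ ∈ F.range := by
    intro k
    induction k with
    | zero =>
      intro n
      have h0 : φ (t0 ^ 0) n * n⁻¹ = 1 := by simp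
      rw [h0]; exact one_mem _
    | succ k ih =>
      intro n
      have : φ (t0 ^ (k+1)) n * n⁻¹
          = (φ (t0 ^ k) (φ t0 n) * (φ t0 n)⁻¹) * (φ t0 n * n⁻¹) := by
        rw [pow_succ, map_mul, MulAut.mul_apply]
        group
      rw [this]
      exact mul_mem (ih _) ⟨n, rfl⟩
  have hrange : ∀ (t : T) (n : N), φ t n * n⁻¹ ∈ F.range := by
    intro t n
    obtain ⟨k, rfl⟩ := ht0 t
    exact hpow k n
  have heq : commutator (N ⋊[φ] T) = Subgroup.map inl F.range := by
    apply le_antisymm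
    · rw [commutator_def, Subgroup.commutator_le]
      intro g _ h _
      rw [sdp_commutator_eq]
      exact ⟨_, mul_mem (inv_mem (hrange _ _)) (hrange _ _), rfl⟩
    · rintro x ⟨y, ⟨n, rfl⟩, rfl⟩
      rw [hFapp]
      have h1 : (inl ((φ t0) n * n⁻¹) : N ⋊[φ] T) = ⁅(inr t0 : N ⋊[φ] T), inl n⁆ := by
        rw [commutatorElement_def, map_mul, inl_aut, map_inv, map_inv]
      rw [h1, commutator_def]
      exact Subgroup.commutator_mem_commutator (Subgroup.mem_top _) (Subgroup.mem_top _)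
  have e : N ≃* (commutator (N ⋊[φ] T)) :=
    ((MonoidHom.ofInjective hFinj).trans
      (Subgroup.equivMapOfInjective F.range inl inl_injective)).trans
      (MulEquiv.subgroupCongr heq.symm)
  refine ⟨⟨e.symm⟩, fun x y => ?_⟩
  apply e.symm.injective
  rw [map_mul, map_mul, mul_comm]

open Multiplicative in
theorem commutator_K_s (p : ℕ) [Fact p.Prime] (hodd : Odd p) (s : ℕ) (hs : 1 ≤ s)
    (φ : Multiplicative (ZMod (p ^ s)) →*
      MulAut (Multiplicative (Fin (p ^ (s - 1) * (p - 1)) → ℤ_[p])))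
    (hφ₁ : ∀ z l : Fin (p ^ (s - 1) * (p - 1)), (z : ℕ) = 0 →
      (l : ℕ) = p ^ (s - 1) * (p - 1) - 1 →
      φ (ofAdd 1) (ofAdd (Pi.single z 1)) = (ofAdd (Pi.single l 1))⁻¹)
    (hφ₂ : ∀ j k l : Fin (p ^ (s - 1) * (p - 1)), (k : ℕ) = (j : ℕ) + 1 →
      (l : ℕ) = p ^ (s - 1) * (p - 1) - 1 →
      φ (ofAdd 1) (ofAdd (Pi.single k 1)) =
        if p ^ (s - 1) ∣ (k : ℕ) then ofAdd (Pi.single j 1) * (ofAdd (Pi.single l 1))⁻¹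
        else ofAdd (Pi.single j 1)) :
    Nonempty ((commutator (Multiplicative (Fin (p ^ (s - 1) * (p - 1)) → ℤ_[p]) ⋊[φ] Multiplicative (ZMod (p ^ s)))) ≃*
      Multiplicative (Fin (p ^ (s - 1) * (p - 1)) → ℤ_[p])) ∧
    (∀ x y : commutator (Multiplicative (Fin (p ^ (s - 1) * (p - 1)) → ℤ_[p]) ⋊[φ] Multiplicative (ZMod (p ^ s))), x * y = y * x) := by
  have hp : p.Prime := Fact.out
  have hp1 : 1 ≤ p := hp.one_lt.le
  have hq : 0 < p ^ (s-1) := pow_pos hp.pos _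
  have hdpos : 0 < p ^ (s-1) * (p-1) := Nat.mul_pos hq (by have := hp.two_le; omega)
  haveI : NeZero (p ^ s) := ⟨pow_ne_zero s hp.ne_zero⟩
  -- every element of the cyclic part is a power of ofAdd 1
  have ht0 : ∀ t : Multiplicative (ZMod (p^s)), ∃ k : ℕ, t = (ofAdd (1 : ZMod (p^s)))^k := by
    intro t
    refine ⟨(Multiplicative.toAdd t).val, ?_⟩
    have h1 : ((Multiplicative.toAdd t).val • (1 : ZMod (p^s))) = Multiplicative.toAdd t := by
      rw [nsmul_eq_mul, mul_one]
      exact ZMod.natCast_rightInverse _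
    conv_lhs => rw [← ofAdd_toAdd t, ← h1]
    rw [ofAdd_nsmul]
  -- injectivity: the automorphism has no nontrivial fixed points
  have hinj : ∀ n : Multiplicative (Fin (p^(s-1)*(p-1)) → ℤ_[p]),
      φ (ofAdd 1) n = n → n = 1 := by
    intro n hn
    set ψ : (Fin (p^(s-1)*(p-1)) → ℤ_[p]) →+ (Fin (p^(s-1)*(p-1)) → ℤ_[p]) :=
      AddMonoidHom.mk' (fun x => Multiplicative.toAdd (φ (ofAdd 1) (ofAdd x)))
        (fun x y => by rw [ofAdd_add, map_mul, toAdd_mul]) with hψdefn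
    have hψdef : ∀ x, ψ x = Multiplicative.toAdd (φ (ofAdd 1) (ofAdd x)) := fun _ => rfl
    set a := Multiplicative.toAdd n with ha_def
    have ha : ψ a = a := by rw [hψdef, ofAdd_toAdd, hn]
    set lst : Fin (p^(s-1)*(p-1)) := ⟨p^(s-1)*(p-1) - 1, by omega⟩ with hlst
    set i0 : Fin (p^(s-1)*(p-1)) := ⟨0, hdpos⟩ with hi0
    have hlstval : (lst : ℕ) = p^(s-1)*(p-1) - 1 := rfl
    have hi0val : (i0 : ℕ) = 0 := rfl
    have hψ0 : ψ (Pi.single i0 1) = -(Pi.single lst 1) := by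
      rw [hψdef, hφ₁ i0 lst rfl rfl, toAdd_inv, toAdd_ofAdd]
    have hψk : ∀ j k : Fin (p^(s-1)*(p-1)), (k:ℕ) = (j:ℕ)+1 →
        ψ (Pi.single k 1) = (if p^(s-1) ∣ (k:ℕ) then Pi.single j 1 - Pi.single lst 1
          else Pi.single j 1) := by
      intro j k hk
      have h := hφ₂ j k lst hk rfl
      rw [hψdef, h]
      by_cases hdvd : p^(s-1) ∣ (k:ℕ)
      · rw [if_pos hdvd, if_pos hdvd, toAdd_mul, toAdd_inv, toAdd_ofAdd, toAdd_ofAdd,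
          sub_eq_add_neg]
      · rw [if_neg hdvd, if_neg hdvd, toAdd_ofAdd]
    have hsingle : ∀ (i : Fin (p^(s-1)*(p-1))) (c : ℤ_[p]),
        (Pi.single i c : Fin (p^(s-1)*(p-1)) → ℤ_[p]) = c • (Pi.single i 1 : Fin (p^(s-1)*(p-1)) → ℤ_[p]) := by
      intro i c; funext x; by_cases h : x = i
      · subst h; simp
      · simp [Pi.single_eq_of_ne h]
    have hsum : ∀ (b : Fin (p^(s-1)*(p-1)) → ℤ_[p]) (j),
        ψ b j = ∑ i, b i * ψ (Pi.single i 1) j := by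
      intro b j
      have h1 : ψ b = ∑ i, ψ (Pi.single i (b i)) := by
        rw [← map_sum]; congr 1; exact (Finset.univ_sum_single b).symm
      rw [h1, Finset.sum_apply]
      exact Finset.sum_congr rfl fun i _ => by
        rw [hsingle i (b i), addhom_padic_smul]
        simp [Pi.smul_apply, smul_eq_mul]
    -- value of ψ on basis vectors, at coordinates other than the last
    have hw : ∀ (i j : Fin (p^(s-1)*(p-1))), (j:ℕ) ≠ p^(s-1)*(p-1) - 1 →
        ψ (Pi.single i 1) j = if (i:ℕ) = (j:ℕ)+1 then 1 else 0 := by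
      intro i j hj
      have hjlst : j ≠ lst := by
        intro h; apply hj; rw [h, hlstval]
      by_cases h0 : (i:ℕ) = 0
      · have hii : i = i0 := Fin.ext (by rw [h0, hi0val])
        rw [hii, hψ0, Pi.neg_apply, Pi.single_eq_of_ne hjlst, neg_zero,
          if_neg (by omega)]
      · have hilt := i.isLt
        have hjlt := j.isLt
        have hb : (i:ℕ) - 1 < p^(s-1)*(p-1) := by omega
        rw [hψk ⟨(i:ℕ)-1, hb⟩ i (by simp; omega)]
        have hjj : (j = (⟨(i:ℕ)-1, hb⟩ : Fin (p^(s-1)*(p-1)))) ↔ ((i:ℕ) = (j:ℕ)+1) := by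
          rw [Fin.ext_iff]; simp; omega
        by_cases hdvd : p^(s-1) ∣ (i:ℕ)
        · rw [if_pos hdvd, Pi.sub_apply, Pi.single_eq_of_ne hjlst, sub_zero,
            Pi.single_apply]
          by_cases hc : j = ⟨(i:ℕ)-1, hb⟩
          · rw [if_pos hc, if_pos (hjj.1 hc)]
          · rw [if_neg hc, if_neg (fun h => hc (hjj.2 h))]
        · rw [if_neg hdvd, Pi.single_apply]
          by_cases hc : j = ⟨(i:ℕ)-1, hb⟩
          · rw [if_pos hc, if_pos (hjj.1 hc)]
          · rw [if_neg hc, if_neg (fun h => hc (hjj.2 h))]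
    -- value of ψ on basis vectors at the last coordinate
    have hv : ∀ i : Fin (p^(s-1)*(p-1)),
        ψ (Pi.single i 1) lst = if p^(s-1) ∣ (i:ℕ) then -1 else 0 := by
      intro i
      by_cases h0 : (i:ℕ) = 0
      · have hii : i = i0 := Fin.ext (by rw [h0, hi0val])
        rw [hii, hψ0, Pi.neg_apply, Pi.single_eq_same, if_pos (by rw [hi0val]; exact dvd_zero _)]
      · have hilt := i.isLt
        have hb : (i:ℕ) - 1 < p^(s-1)*(p-1) := by omega
        have hne : lst ≠ (⟨(i:ℕ)-1, hb⟩ : Fin (p^(s-1)*(p-1))) := by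
          rw [Fin.ne_iff_vne, hlstval]; simp; omega
        rw [hψk ⟨(i:ℕ)-1, hb⟩ i (by simp; omega)]
        by_cases hdvd : p^(s-1) ∣ (i:ℕ)
        · rw [if_pos hdvd, if_pos hdvd, Pi.sub_apply, Pi.single_eq_of_ne hne,
            Pi.single_eq_same, zero_sub]
        · rw [if_neg hdvd, if_neg hdvd, Pi.single_eq_of_ne hne]
    -- consecutive coordinates of the fixed vector agree
    have hstep : ∀ j k : Fin (p^(s-1)*(p-1)), (k:ℕ) = (j:ℕ)+1 → a j = a k := by
      intro j k hk
      have hklt := k.isLt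
      have hj : (j:ℕ) ≠ p^(s-1)*(p-1) - 1 := by omega
      have h1 := hsum a j
      rw [ha] at h1
      have h2 : ∑ i, a i * ψ (Pi.single i 1) j = a k * ψ (Pi.single k 1) j :=
        Finset.sum_eq_single k
          (fun i _ hik => by
            rw [hw i j hj, if_neg (fun h => hik (Fin.ext (by omega))), mul_zero])
          (fun h => absurd (Finset.mem_univ k) h)
      rw [h1, h2, hw k j hj, if_pos hk, mul_one]
    -- all coordinates equal the last one
    have hconst : ∀ j : Fin (p^(s-1)*(p-1)), a j = a lst := by
      have key : ∀ m : ℕ, ∀ j : Fin (p^(s-1)*(p-1)),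
          (j:ℕ) = p^(s-1)*(p-1) - 1 - m → a j = a lst := by
        intro m
        induction m with
        | zero =>
          intro j hj
          have : j = lst := Fin.ext (by rw [hlstval]; omega)
          rw [this]
        | succ m ih =>
          intro j hj
          by_cases hm : m + 1 ≤ p^(s-1)*(p-1) - 1
          · have hb : (j:ℕ)+1 < p^(s-1)*(p-1) := by omega
            have h1 : a j = a ⟨(j:ℕ)+1, hb⟩ := hstep j ⟨(j:ℕ)+1, hb⟩ rfl
            rw [h1, ih ⟨(j:ℕ)+1, hb⟩ (by simp; omega)]
          · exact ih j (by omega)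
      intro j
      have hjlt := j.isLt
      exact key (p^(s-1)*(p-1) - 1 - (j:ℕ)) j (by omega)
    -- the equation at the last coordinate forces everything to vanish
    have hlast : a lst = (p-1 : ℕ) • (-(a lst)) := by
      have h1 := hsum a lst
      rw [ha] at h1
      calc a lst = ∑ i, a i * ψ (Pi.single i 1) lst := h1
        _ = ∑ i : Fin (p^(s-1)*(p-1)), (if p^(s-1) ∣ (i:ℕ) then -(a lst) else 0) :=
            Finset.sum_congr rfl (fun i _ => by
              rw [hv i, hconst i]; split_ifs <;> ring)
        _ = (p-1 : ℕ) • (-(a lst)) := fin_sum_ite_dvd (p^(s-1)) (p-1) hq _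
    have hz : a lst = 0 := by
      have h2 : ((p:ℕ):ℤ_[p]) * a lst = 0 := by
        rw [nsmul_eq_mul, Nat.cast_sub hp1, Nat.cast_one] at hlast
        linear_combination hlast
      rcases mul_eq_zero.1 h2 with h | h
      · exact absurd h (Nat.cast_ne_zero.2 hp.ne_zero)
      · exact h
    have haz : a = 0 := funext fun j => by rw [hconst j, hz]; rfl
    apply Multiplicative.toAdd.injective
    rw [toAdd_one, ← ha_def, haz]
  exact sdp_main φ (ofAdd 1) ht0 hinj
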